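/- Let (Ω, 𝓕, P) be a probability space with a filtration 𝓕_1 ⊆ 𝓕_2 ⊆ … ⊆ 𝓕, let d, T be positive integers, and let γ > 0, r ≥ 0, b ≥ 0, G ≥ 0, λ ≥ 0 be real numbers. For each 1 ≤ t ≤ T let ℓ_t : ℝ^d → ℝ be a differentiable convex function, and let w_1, …, w_{T+1} ∈ ℝ^d be deterministic comparators with ‖w_t‖ ≤ r. Let θ_1, …, θ_{T+1} : Ω → ℝ^d be random iterates and η_1, …, η_T : Ω → ℝ^d square-integrable random gradient estimates such that: θ_t is 𝓕_t-measurable and ‖θ_t‖ ≤ r almost surely for each t; θ_{t+1} = θ_t − γ·η_t almost surely for each 1 ≤ t ≤ T; ‖E[η_t | 𝓕_t] − ∇ℓ_t(θ_t)‖ ≤ b almost surely for each t; E‖η_t‖² ≤ G + λ for each t; and ℓ_t(θ_t) is integrable for each t. Then E[ Σ_{t=1}^{T} (ℓ_t(θ_t) − ℓ_t(w_t)) ] ≤ 2·T·b·r + (2r²)/γ + (2r/γ)·Σ_{t=1}^{T} ‖w_t − w_{t+1}‖ + (T·γ·(G + λ))/2. -/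

import Mathlib

open MeasureTheory
open scoped RealInnerProductSpace

section Aux

lemma coord_abs_le_norm {d : ℕ} (x : EuclideanSpace ℝ (Fin d)) (i : Fin d) :
    |x i| ≤ ‖x‖ := by
  rw [EuclideanSpace.norm_eq]
  calc |x i| = Real.sqrt (‖x i‖ ^ 2) := by
        rw [Real.norm_eq_abs, Real.sqrt_sq (abs_nonneg _)]
    _ ≤ Real.sqrt (∑ j, ‖x j‖ ^ 2) := Real.sqrt_le_sqrt
        (Finset.single_le_sum (f := fun j => ‖x j‖ ^ 2) (fun j _ => sq_nonneg _)
          (Finset.mem_univ i))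

lemma grad_convex_ineq {d : ℕ} {f : EuclideanSpace ℝ (Fin d) → ℝ}
    (hconv : ConvexOn ℝ Set.univ f) (hdiff : Differentiable ℝ f)
    (x y : EuclideanSpace ℝ (Fin d)) :
    f x - f y ≤ ⟪gradient f x, x - y⟫ := by
  rcases eq_or_ne y x with rfl | hne
  · simp
  -- show f x + ⟪∇ f x, y - x⟫ ≤ f y
  have key : ⟪gradient f x, y - x⟫ ≤ f y - f x := by
    set g : ℝ → ℝ := fun s => f (AffineMap.lineMap x y s) with hg
    have hgconv : ConvexOn ℝ Set.univ g := by
      have := hconv.comp_affineMap (AffineMap.lineMap x y (k := ℝ))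
      rw [Set.preimage_univ] at this
      exact this
    have hline : HasDerivAt (fun s : ℝ => (AffineMap.lineMap x y : ℝ →ᵃ[ℝ] _) s) (y - x) 0 := by
      have h1 : HasDerivAt (fun s : ℝ => s • (y - x) + x) (y - x) 0 := by
        simpa using ((hasDerivAt_id (0:ℝ)).smul_const (y - x)).add_const x
      convert h1 using 2 with s
      rw [AffineMap.lineMap_apply, vsub_eq_sub, vadd_eq_add]
    have hg0 : HasDerivAt g (fderiv ℝ f x (y - x)) 0 := by
      have hf : HasFDerivAt f (fderiv ℝ f x) ((AffineMap.lineMap x y : ℝ →ᵃ[ℝ] _) (0:ℝ)) := by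
        simpa using (hdiff x).hasFDerivAt
      exact hf.comp_hasDerivAt 0 hline
    have hslope := hgconv.le_slope_of_hasDerivAt (Set.mem_univ (0:ℝ)) (Set.mem_univ (1:ℝ))
      one_pos hg0
    have hsl : slope g 0 1 = f y - f x := by
      simp [slope_def_field, hg]
    have hgrad : ⟪gradient f x, y - x⟫ = fderiv ℝ f x (y - x) := by
      rw [gradient]
      exact InnerProductSpace.toDual_symm_apply
    rw [hgrad]
    calc fderiv ℝ f x (y - x) ≤ slope g 0 1 := hslope
      _ = f y - f x := hsl
  have : ⟪gradient f x, x - y⟫ = - ⟪gradient f x, y - x⟫ := by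
    rw [← inner_neg_right, neg_sub]
  linarith [key, this.ge, this.le]


lemma condexp_comp_clm {Ω : Type*} {m m0 : MeasurableSpace Ω} (hm : m ≤ m0)
    {μ : Measure Ω} [IsFiniteMeasure μ]
    {E F : Type*} [NormedAddCommGroup E] [NormedSpace ℝ E] [CompleteSpace E]
    [NormedAddCommGroup F] [NormedSpace ℝ F] [CompleteSpace F]
    (L : E →L[ℝ] F) {f : Ω → E} (hf : Integrable f μ) :
    μ[fun ω => L (f ω)|m] =ᵐ[μ] fun ω => L ((μ[f|m]) ω) := by
  refine (ae_eq_condExp_of_forall_setIntegral_eq hm (L.integrable_comp hf)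
    (fun s _ _ => (L.integrable_comp integrable_condExp).integrableOn)
    (fun s hs hμs => ?_)
    ((L.continuous.comp_stronglyMeasurable
      stronglyMeasurable_condExp).aestronglyMeasurable)).symm
  rw [L.integral_comp_comm integrable_condExp.integrableOn,
      L.integral_comp_comm hf.integrableOn,
      setIntegral_condExp hm hf hs]

lemma integral_inner_condexp {Ω : Type*} {m m0 : MeasurableSpace Ω} (hm : m ≤ m0)
    {μ : Measure Ω} [IsProbabilityMeasure μ] {d : ℕ}
    {X f : Ω → EuclideanSpace ℝ (Fin d)} (hX : StronglyMeasurable[m] X)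
    {c : ℝ} (hXbd : ∀ᵐ ω ∂μ, ‖X ω‖ ≤ c) (hf : Integrable f μ) :
    ∫ ω, ⟪X ω, (μ[f|m]) ω⟫ ∂μ = ∫ ω, ⟪X ω, f ω⟫ ∂μ := by
  have hXae : AEStronglyMeasurable X μ := (hX.mono hm).aestronglyMeasurable
  have hXi : ∀ i : Fin d, StronglyMeasurable[m] (fun ω => X ω i) := fun i =>
    (EuclideanSpace.proj i).continuous.comp_stronglyMeasurable hX
  have hXibd : ∀ i : Fin d, ∀ᵐ ω ∂μ, ‖X ω i‖ ≤ c := fun i => by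
    filter_upwards [hXbd] with ω hω
    exact (coord_abs_le_norm (X ω) i).trans hω
  have hfi : ∀ i : Fin d, Integrable (fun ω => f ω i) μ := fun i =>
    ((EuclideanSpace.proj i : EuclideanSpace ℝ (Fin d) →L[ℝ] ℝ).integrable_comp hf)
  have hmi : ∀ i : Fin d, Integrable (fun ω => (μ[f|m]) ω i) μ := fun i =>
    ((EuclideanSpace.proj i : EuclideanSpace ℝ (Fin d) →L[ℝ] ℝ).integrable_comp
      integrable_condExp)
  have hinner : ∀ (g : Ω → EuclideanSpace ℝ (Fin d)) (ω : Ω),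
      ⟪X ω, g ω⟫ = ∑ i, X ω i * g ω i := by
    intro g ω
    simp [PiLp.inner_apply, RCLike.inner_apply, mul_comm]
  have hXfi_int : ∀ i, Integrable (fun ω => X ω i * f ω i) μ := fun i =>
    (hfi i).bdd_mul ((hXi i).mono hm).aestronglyMeasurable (hXibd i)
  have hXmi_int : ∀ i, Integrable (fun ω => X ω i * (μ[f|m]) ω i) μ := fun i =>
    (hmi i).bdd_mul ((hXi i).mono hm).aestronglyMeasurable (hXibd i)
  have step : ∀ i : Fin d,
      (∫ ω, X ω i * (μ[f|m]) ω i ∂μ) = ∫ ω, X ω i * f ω i ∂μ := by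
    intro i
    have h1 : μ[(fun ω => X ω i) * (fun ω => f ω i)|m]
        =ᵐ[μ] (fun ω => X ω i) * μ[fun ω => f ω i|m] :=
      condExp_stronglyMeasurable_mul_of_bound hm (hXi i) (hfi i) c (hXibd i)
    have h2 : (μ[fun ω => f ω i|m]) =ᵐ[μ] fun ω => (μ[f|m]) ω i :=
      condexp_comp_clm hm (EuclideanSpace.proj i) hf
    have h3 : (∫ ω, X ω i * f ω i ∂μ)
        = ∫ ω, ((fun ω => X ω i) * μ[fun ω => f ω i|m]) ω ∂μ := by
      rw [← integral_congr_ae h1, integral_condExp hm]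
      rfl
    rw [h3]
    refine integral_congr_ae ?_
    filter_upwards [h2] with ω hω
    simp [hω]
  calc (∫ ω, ⟪X ω, (μ[f|m]) ω⟫ ∂μ)
      = ∫ ω, ∑ i, X ω i * (μ[f|m]) ω i ∂μ := by
        refine integral_congr_ae (Filter.Eventually.of_forall fun ω => hinner _ ω)
    _ = ∑ i, ∫ ω, X ω i * (μ[f|m]) ω i ∂μ := integral_finset_sum _ fun i _ => hXmi_int i
    _ = ∑ i, ∫ ω, X ω i * f ω i ∂μ := by simp_rw [step]
    _ = ∫ ω, ∑ i, X ω i * f ω i ∂μ := (integral_finset_sum _ fun i _ => hXfi_int i).symm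
    _ = ∫ ω, ⟪X ω, f ω⟫ ∂μ := by
        refine integral_congr_ae (Filter.Eventually.of_forall fun ω => (hinner _ ω).symm)

end Aux


set_option maxHeartbeats 2000000 in
/-- Dynamic regret bound for online gradient descent with noisy, biased gradient
estimates: with conditional bias bounded by `b`, second moments bounded by `G + λ`,
iterates and deterministic comparators in the ball of radius `r`, the expected dynamic
regret is at most `2Tbr + 2r²/γ + (2r/γ)·V + Tγ(G+λ)/2`. -/
theorem ogd_dynamic_regret_stochastic {Ω : Type*} {mΩ : MeasurableSpace Ω}
    (P : Measure Ω) [IsProbabilityMeasure P]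
    (ℱ : Filtration ℕ mΩ)
    (d T : ℕ) (hd : 0 < d) (hT : 0 < T)
    (γ r b G lam : ℝ) (hγ : 0 < γ) (hr : 0 ≤ r) (hb : 0 ≤ b) (hG : 0 ≤ G) (hlam : 0 ≤ lam)
    (ℓ : ℕ → EuclideanSpace ℝ (Fin d) → ℝ)
    (hdiff : ∀ t, 1 ≤ t → t ≤ T → Differentiable ℝ (ℓ t))
    (hconv : ∀ t, 1 ≤ t → t ≤ T → ConvexOn ℝ Set.univ (ℓ t))
    (w : ℕ → EuclideanSpace ℝ (Fin d))
    (hw : ∀ t, 1 ≤ t → t ≤ T + 1 → ‖w t‖ ≤ r)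
    (θ η : ℕ → Ω → EuclideanSpace ℝ (Fin d))
    (hθmeas : ∀ t, 1 ≤ t → t ≤ T + 1 → StronglyMeasurable[ℱ t] (θ t))
    (hθbd : ∀ t, 1 ≤ t → t ≤ T + 1 → ∀ᵐ ω ∂P, ‖θ t ω‖ ≤ r)
    (hηL2 : ∀ t, 1 ≤ t → t ≤ T → MemLp (η t) 2 P)
    (hupd : ∀ t, 1 ≤ t → t ≤ T → ∀ᵐ ω ∂P, θ (t + 1) ω = θ t ω - γ • η t ω)
    (hbias : ∀ t, 1 ≤ t → t ≤ T →
      ∀ᵐ ω ∂P, ‖(P[η t|ℱ t]) ω - gradient (ℓ t) (θ t ω)‖ ≤ b)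
    (hsecond : ∀ t, 1 ≤ t → t ≤ T → (∫ ω, ‖η t ω‖ ^ 2 ∂P) ≤ G + lam)
    (hint : ∀ t, 1 ≤ t → t ≤ T → Integrable (fun ω => ℓ t (θ t ω)) P) :
    (∫ ω, ∑ t ∈ Finset.Icc 1 T, (ℓ t (θ t ω) - ℓ t (w t)) ∂P) ≤
      2 * (T : ℝ) * b * r + 2 * r ^ 2 / γ
        + (2 * r / γ) * ∑ t ∈ Finset.Icc 1 T, ‖w t - w (t + 1)‖
        + (T : ℝ) * γ * (G + lam) / 2 := by
  classical
  set a : ℕ → ℝ := fun t => ∫ ω, ‖θ t ω - w t‖ ^ 2 ∂P with ha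
  have hXsm : ∀ t, 1 ≤ t → t ≤ T + 1 → StronglyMeasurable[ℱ t] (fun ω => θ t ω - w t) :=
    fun t h1 h2 => (hθmeas t h1 h2).sub stronglyMeasurable_const
  have hXae : ∀ t, 1 ≤ t → t ≤ T + 1 → AEStronglyMeasurable (fun ω => θ t ω - w t) P :=
    fun t h1 h2 => ((hXsm t h1 h2).mono (ℱ.le t)).aestronglyMeasurable
  have hXbd : ∀ t, 1 ≤ t → t ≤ T + 1 → ∀ᵐ ω ∂P, ‖θ t ω - w t‖ ≤ 2 * r := by
    intro t h1 h2
    filter_upwards [hθbd t h1 h2] with ω hω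
    calc ‖θ t ω - w t‖ ≤ ‖θ t ω‖ + ‖w t‖ := norm_sub_le _ _
      _ ≤ r + r := add_le_add hω (hw t h1 h2)
      _ = 2 * r := by ring
  have hDint : ∀ t, 1 ≤ t → t ≤ T + 1 → Integrable (fun ω => ‖θ t ω - w t‖ ^ 2) P := by
    intro t h1 h2
    refine Integrable.mono' (integrable_const ((2*r)^2))
      ((continuous_pow 2).comp_aestronglyMeasurable (hXae t h1 h2).norm) ?_
    filter_upwards [hXbd t h1 h2] with ω hω
    simpa [abs_of_nonneg (sq_nonneg (‖θ t ω - w t‖))] using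
      pow_le_pow_left₀ (norm_nonneg _) hω 2
  have hT1 : (1:ℕ) ≤ T + 1 := by omega
  have ha1 : a 1 ≤ (2*r)^2 := by
    have hb1 : ∀ᵐ ω ∂P, ‖θ 1 ω - w 1‖ ^ 2 ≤ (2*r)^2 := by
      filter_upwards [hXbd 1 le_rfl hT1] with ω hω
      exact pow_le_pow_left₀ (norm_nonneg _) hω 2
    have := integral_mono_ae (hDint 1 le_rfl hT1) (integrable_const ((2*r)^2)) hb1
    simpa [ha] using this
  have haT : 0 ≤ a (T+1) := integral_nonneg fun ω => sq_nonneg _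
  -- per-step key bound
  have key : ∀ t ∈ Finset.Icc 1 T,
      (∫ ω, (ℓ t (θ t ω) - ℓ t (w t)) ∂P) ≤
        2*b*r + (a t - a (t+1))/(2*γ) + (2*r/γ)*‖w t - w (t+1)‖ + γ/2*(G+lam) := by
    intro t htmem
    obtain ⟨ht1, ht2⟩ := Finset.mem_Icc.mp htmem
    have htT1 : t ≤ T + 1 := by omega
    have ht1' : (1:ℕ) ≤ t + 1 := by omega
    have ht2' : t + 1 ≤ T + 1 := by omega
    have hηint : Integrable (η t) P := (hηL2 t ht1 ht2).integrable one_le_two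
    have hη2int : Integrable (fun ω => ‖η t ω‖^2) P := ((hηL2 t ht1 ht2).norm).integrable_sq
    -- Step A (pointwise)
    have haept : ∀ᵐ ω ∂P, ℓ t (θ t ω) - ℓ t (w t) ≤
        ⟪θ t ω - w t, (P[η t|ℱ t]) ω⟫ + 2*b*r := by
      filter_upwards [hXbd t ht1 htT1, hbias t ht1 ht2] with ω h1 h2
      have hc := grad_convex_ineq (hconv t ht1 ht2) (hdiff t ht1 ht2) (θ t ω) (w t)
      have hsplit : ⟪gradient (ℓ t) (θ t ω), θ t ω - w t⟫
          = ⟪θ t ω - w t, (P[η t|ℱ t]) ω⟫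
            + ⟪θ t ω - w t, gradient (ℓ t) (θ t ω) - (P[η t|ℱ t]) ω⟫ := by
        rw [real_inner_comm, ← inner_add_right]
        congr 1
        abel
      have hbound : ⟪θ t ω - w t, gradient (ℓ t) (θ t ω) - (P[η t|ℱ t]) ω⟫ ≤ (2*r) * b := by
        calc ⟪θ t ω - w t, gradient (ℓ t) (θ t ω) - (P[η t|ℱ t]) ω⟫
            ≤ ‖θ t ω - w t‖ * ‖gradient (ℓ t) (θ t ω) - (P[η t|ℱ t]) ω‖ :=
              real_inner_le_norm _ _
          _ ≤ (2*r) * b := by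
              refine mul_le_mul h1 ?_ (norm_nonneg _) (by positivity)
              rw [norm_sub_rev]; exact h2
      nlinarith [hc, hsplit, hbound]
    have hmint : Integrable (P[η t|ℱ t]) P := integrable_condExp
    have hinner_m_int : Integrable (fun ω => ⟪θ t ω - w t, (P[η t|ℱ t]) ω⟫) P := by
      refine Integrable.mono' (hmint.norm.const_mul (2*r))
        (AEStronglyMeasurable.inner (𝕜 := ℝ) (hXae t ht1 htT1)
          hmint.aestronglyMeasurable) ?_
      filter_upwards [hXbd t ht1 htT1] with ω hω
      rw [Real.norm_eq_abs]
      exact (abs_real_inner_le_norm _ _).trans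
        (mul_le_mul_of_nonneg_right hω (norm_nonneg _))
    have hA : (∫ ω, (ℓ t (θ t ω) - ℓ t (w t)) ∂P) ≤
        (∫ ω, ⟪θ t ω - w t, (P[η t|ℱ t]) ω⟫ ∂P) + 2*b*r := by
      have h0 := integral_mono_ae ((hint t ht1 ht2).sub (integrable_const (ℓ t (w t))))
        (hinner_m_int.add (integrable_const (2*b*r))) haept
      have h2 : (∫ ω, (⟪θ t ω - w t, (P[η t|ℱ t]) ω⟫ + 2*b*r) ∂P)
          = (∫ ω, ⟪θ t ω - w t, (P[η t|ℱ t]) ω⟫ ∂P) + 2*b*r := by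
        rw [integral_add hinner_m_int (integrable_const _), integral_const]
        simp
      simp only [Pi.sub_apply, Pi.add_apply] at h0
      linarith [h0, h2]
    have hB : (∫ ω, ⟪θ t ω - w t, (P[η t|ℱ t]) ω⟫ ∂P)
        = ∫ ω, ⟪θ t ω - w t, η t ω⟫ ∂P :=
      integral_inner_condexp (ℱ.le t) (hXsm t ht1 htT1) (hXbd t ht1 htT1) hηint
    -- Step C (pointwise)
    have hCae : ∀ᵐ ω ∂P, ⟪θ t ω - w t, η t ω⟫ ≤
        (‖θ t ω - w t‖^2 - ‖θ (t+1) ω - w (t+1)‖^2)/(2*γ)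
          + (2*r/γ)*‖w t - w (t+1)‖ + γ/2*‖η t ω‖^2 := by
      filter_upwards [hupd t ht1 ht2, hθbd (t+1) ht1' ht2', hθbd t ht1 htT1]
        with ω hu h2 h3
      have hp : θ (t+1) ω - w t = (θ t ω - w t) - γ • η t ω := by
        rw [hu]; abel
      have hnorm : ‖θ (t+1) ω - w t‖^2
          = ‖θ t ω - w t‖^2 - 2*γ*⟪θ t ω - w t, η t ω⟫ + γ^2*‖η t ω‖^2 := by
        rw [hp, norm_sub_sq_real, real_inner_smul_right, norm_smul,
          Real.norm_eq_abs, abs_of_pos hγ]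
        ring
      have hdiffsq : ‖θ (t+1) ω - w (t+1)‖^2 - ‖θ (t+1) ω - w t‖^2
          ≤ 4*r*‖w t - w (t+1)‖ := by
        have hid : ∀ x y : EuclideanSpace ℝ (Fin d), ‖x‖^2 - ‖y‖^2 = ⟪x - y, x + y⟫ := by
          intro x y
          rw [inner_sub_left, inner_add_right, inner_add_right,
            real_inner_self_eq_norm_sq, real_inner_self_eq_norm_sq,
            real_inner_comm y x]
          ring
        have hup : (θ (t+1) ω - w (t+1)) - (θ (t+1) ω - w t) = w t - w (t+1) := by abel
        have h4 : ‖(θ (t+1) ω - w (t+1)) + (θ (t+1) ω - w t)‖ ≤ 4*r := by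
          calc ‖(θ (t+1) ω - w (t+1)) + (θ (t+1) ω - w t)‖
              ≤ ‖θ (t+1) ω - w (t+1)‖ + ‖θ (t+1) ω - w t‖ := norm_add_le _ _
            _ ≤ (r + r) + (r + r) := add_le_add
                ((norm_sub_le _ _).trans (add_le_add h2 (hw (t+1) ht1' ht2')))
                ((norm_sub_le _ _).trans (add_le_add h2 (hw t ht1 htT1)))
            _ = 4*r := by ring
        calc ‖θ (t+1) ω - w (t+1)‖^2 - ‖θ (t+1) ω - w t‖^2
            = ⟪w t - w (t+1), (θ (t+1) ω - w (t+1)) + (θ (t+1) ω - w t)⟫ := by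
              rw [hid, hup]
          _ ≤ ‖w t - w (t+1)‖ * ‖(θ (t+1) ω - w (t+1)) + (θ (t+1) ω - w t)‖ :=
              real_inner_le_norm _ _
          _ ≤ ‖w t - w (t+1)‖ * (4*r) := mul_le_mul_of_nonneg_left h4 (norm_nonneg _)
          _ = 4*r*‖w t - w (t+1)‖ := by ring
      have hiv : ⟪θ t ω - w t, η t ω⟫
          = (‖θ t ω - w t‖^2 - ‖θ (t+1) ω - w t‖^2)/(2*γ) + γ/2*‖η t ω‖^2 := by
        rw [hnorm]; field_simp; ring
      rw [hiv]
      have h2γ : (0:ℝ) < 2*γ := by linarith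
      have hm2 : (‖θ t ω - w t‖^2 - ‖θ (t+1) ω - w t‖^2)/(2*γ)
          ≤ (‖θ t ω - w t‖^2 - ‖θ (t+1) ω - w (t+1)‖^2 + 4*r*‖w t - w (t+1)‖)/(2*γ) :=
        (div_le_div_iff_of_pos_right h2γ).mpr (by linarith)
      have heq : (‖θ t ω - w t‖^2 - ‖θ (t+1) ω - w (t+1)‖^2 + 4*r*‖w t - w (t+1)‖)/(2*γ)
          = (‖θ t ω - w t‖^2 - ‖θ (t+1) ω - w (t+1)‖^2)/(2*γ)
            + (2*r/γ)*‖w t - w (t+1)‖ := by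
        field_simp; ring
      linarith [hm2, heq]
    have hinner_η_int : Integrable (fun ω => ⟪θ t ω - w t, η t ω⟫) P := by
      refine Integrable.mono' (hηint.norm.const_mul (2*r))
        ((hXae t ht1 htT1).inner hηint.aestronglyMeasurable) ?_
      filter_upwards [hXbd t ht1 htT1] with ω hω
      rw [Real.norm_eq_abs]
      exact (abs_real_inner_le_norm _ _).trans
        (mul_le_mul_of_nonneg_right hω (norm_nonneg _))
    have hC : (∫ ω, ⟪θ t ω - w t, η t ω⟫ ∂P) ≤
        (a t - a (t+1))/(2*γ) + (2*r/γ)*‖w t - w (t+1)‖ + γ/2*(G+lam) := by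
      have hint1 : Integrable (fun ω =>
          (‖θ t ω - w t‖^2 - ‖θ (t+1) ω - w (t+1)‖^2)/(2*γ)
            + (2*r/γ)*‖w t - w (t+1)‖ + γ/2*‖η t ω‖^2) P :=
        ((((hDint t ht1 htT1).sub (hDint (t+1) ht1' ht2')).div_const _).add
          (integrable_const _)).add (hη2int.const_mul _)
      have hmono := integral_mono_ae hinner_η_int hint1 hCae
      have i3 : Integrable (fun ω =>
          (‖θ t ω - w t‖^2 - ‖θ (t+1) ω - w (t+1)‖^2)/(2*γ)) P :=
        ((hDint t ht1 htT1).sub (hDint (t+1) ht1' ht2')).div_const _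
      have i1 : Integrable (fun ω =>
          (‖θ t ω - w t‖^2 - ‖θ (t+1) ω - w (t+1)‖^2)/(2*γ)
            + (2*r/γ)*‖w t - w (t+1)‖) P := i3.add (integrable_const _)
      have i2 : Integrable (fun ω => γ/2*‖η t ω‖^2) P := hη2int.const_mul _
      have hval : (∫ ω, ((‖θ t ω - w t‖^2 - ‖θ (t+1) ω - w (t+1)‖^2)/(2*γ)
            + (2*r/γ)*‖w t - w (t+1)‖ + γ/2*‖η t ω‖^2) ∂P)
          = (a t - a (t+1))/(2*γ) + (2*r/γ)*‖w t - w (t+1)‖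
            + γ/2*(∫ ω, ‖η t ω‖^2 ∂P) := by
        rw [integral_add i1 i2, integral_add i3 (integrable_const _),
          integral_div, integral_sub (hDint t ht1 htT1) (hDint (t+1) ht1' ht2'),
          integral_const, integral_const_mul]
        simp [ha, measure_univ]
      have hη2 : γ/2*(∫ ω, ‖η t ω‖^2 ∂P) ≤ γ/2*(G+lam) :=
        mul_le_mul_of_nonneg_left (hsecond t ht1 ht2) (by positivity)
      calc (∫ ω, ⟪θ t ω - w t, η t ω⟫ ∂P) ≤ _ := hmono
        _ = _ := hval
        _ ≤ (a t - a (t+1))/(2*γ) + (2*r/γ)*‖w t - w (t+1)‖ + γ/2*(G+lam) := by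
            linarith [hη2]
    calc (∫ ω, (ℓ t (θ t ω) - ℓ t (w t)) ∂P)
        ≤ (∫ ω, ⟪θ t ω - w t, (P[η t|ℱ t]) ω⟫ ∂P) + 2*b*r := hA
      _ = (∫ ω, ⟪θ t ω - w t, η t ω⟫ ∂P) + 2*b*r := by rw [hB]
      _ ≤ ((a t - a (t+1))/(2*γ) + (2*r/γ)*‖w t - w (t+1)‖ + γ/2*(G+lam)) + 2*b*r := by
          linarith [hC]
      _ = 2*b*r + (a t - a (t+1))/(2*γ) + (2*r/γ)*‖w t - w (t+1)‖ + γ/2*(G+lam) := by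
          ring
  -- sum up
  have hsumint : ∀ t ∈ Finset.Icc 1 T, Integrable (fun ω => ℓ t (θ t ω) - ℓ t (w t)) P := by
    intro t htmem
    obtain ⟨ht1, ht2⟩ := Finset.mem_Icc.mp htmem
    exact (hint t ht1 ht2).sub (integrable_const _)
  rw [integral_finset_sum _ hsumint]
  have hsum_le := Finset.sum_le_sum key
  have htel : ∑ t ∈ Finset.Icc 1 T, (a t - a (t+1)) = a 1 - a (T+1) := by
    rw [← Finset.Ico_add_one_right_eq_Icc, Finset.sum_Ico_eq_sum_range]
    have h := Finset.sum_range_sub' (f := fun i => a (1+i)) T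
    simp only [show ∀ i : ℕ, 1 + (i+1) = (1+i) + 1 from fun i => by omega] at h
    simpa [add_comm] using h
  have hsum_eq : ∑ t ∈ Finset.Icc 1 T,
      (2*b*r + (a t - a (t+1))/(2*γ) + (2*r/γ)*‖w t - w (t+1)‖ + γ/2*(G+lam))
      = T*(2*b*r) + (a 1 - a (T+1))/(2*γ)
        + (2*r/γ)*(∑ t ∈ Finset.Icc 1 T, ‖w t - w (t+1)‖) + T*(γ/2*(G+lam)) := by
    rw [Finset.sum_add_distrib, Finset.sum_add_distrib, Finset.sum_add_distrib,
      Finset.sum_const, Finset.sum_const, ← Finset.sum_div, htel, ← Finset.mul_sum]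
    simp [Nat.card_Icc, nsmul_eq_mul]
  have hfrac : (a 1 - a (T+1))/(2*γ) ≤ 2*r^2/γ := by
    rw [div_le_div_iff₀ (by linarith) hγ]
    nlinarith [ha1, haT, hγ.le]
  have e1 : (T:ℝ)*(2*b*r) = 2*T*b*r := by ring
  have e2 : (T:ℝ)*(γ/2*(G+lam)) = T*γ*(G+lam)/2 := by ring
  calc (∑ t ∈ Finset.Icc 1 T, ∫ ω, (ℓ t (θ t ω) - ℓ t (w t)) ∂P)
      ≤ ∑ t ∈ Finset.Icc 1 T,
        (2*b*r + (a t - a (t+1))/(2*γ) + (2*r/γ)*‖w t - w (t+1)‖ + γ/2*(G+lam)) := hsum_le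
    _ = T*(2*b*r) + (a 1 - a (T+1))/(2*γ)
        + (2*r/γ)*(∑ t ∈ Finset.Icc 1 T, ‖w t - w (t+1)‖) + T*(γ/2*(G+lam)) := hsum_eq
    _ ≤ 2 * (T : ℝ) * b * r + 2 * r ^ 2 / γ
        + (2 * r / γ) * ∑ t ∈ Finset.Icc 1 T, ‖w t - w (t + 1)‖
        + (T : ℝ) * γ * (G + lam) / 2 := by linarith [hfrac, e1, e2]
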